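/- For every integer r with 2 ≤ r ≤ 8, the canonical class k_r = −3e_0 + e_1 + ⋯ + e_r is the unique element c ∈ L_r satisfying ⟨c,c⟩ = 9 − r and ⟨c,e⟩ = −1 for every e ∈ E_r = {c ∈ L_r : ⟨k_r,c⟩ = −1 and ⟨c,c⟩ = −1}. (This uniqueness is used in the proof that the Cremona invariant determines the Neron-Severi lattice.) -/
import Mathlib


/-- The intersection form on the Neron-Severi lattice `L_r = ℤ^(r+1)` of a weak del Pezzo
surface of degree `9 - r` in a type 1 basis: `⟨v,w⟩ = v₀w₀ - v₁w₁ - ⋯ - vᵣwᵣ`. -/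
def nsForm (r : ℕ) (v w : Fin (r + 1) → ℤ) : ℤ :=
  v 0 * w 0 - ∑ i : Fin r, v i.succ * w i.succ

/-- The canonical class `k_r = -3e₀ + e₁ + ⋯ + e_r`. -/
def canK (r : ℕ) : Fin (r + 1) → ℤ := fun i => if i = 0 then -3 else 1

/-- The standard basis vector `e_j` of `L_r`. -/
def eVec (r : ℕ) (j : Fin (r + 1)) : Fin (r + 1) → ℤ := fun i => if i = j then 1 else 0

/-- The set of (-2)-classes `R_r = {c : ⟨k_r,c⟩ = 0, ⟨c,c⟩ = -2}`. -/
def Rset (r : ℕ) : Set (Fin (r + 1) → ℤ) :=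
  {c | nsForm r (canK r) c = 0 ∧ nsForm r c c = -2}

/-- The set of (-1)-classes `E_r = {c : ⟨k_r,c⟩ = -1, ⟨c,c⟩ = -1}`. -/
def Eset (r : ℕ) : Set (Fin (r + 1) → ℤ) :=
  {c | nsForm r (canK r) c = -1 ∧ nsForm r c c = -1}

/-- The set of minimal-family classes `F_r = {c : ⟨k_r,c⟩ = -2, ⟨c,c⟩ = 0}`. -/
def Fset (r : ℕ) : Set (Fin (r + 1) → ℤ) :=
  {c | nsForm r (canK r) c = -2 ∧ nsForm r c c = 0}

lemma nsForm_eVec_zero (r : ℕ) (c : Fin (r+1) → ℤ) : nsForm r c (eVec r 0) = c 0 := by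
  simp [nsForm, eVec, Fin.succ_ne_zero]

lemma nsForm_eVec_succ (r : ℕ) (c : Fin (r+1) → ℤ) (i : Fin r) :
    nsForm r c (eVec r i.succ) = -(c i.succ) := by
  have h0 : ((0 : Fin (r+1)) = i.succ) = False := by
    simp [eq_comm, Fin.succ_ne_zero]
  simp [nsForm, eVec, h0, Fin.succ_inj, mul_ite]

lemma nsForm_sub_right (r : ℕ) (c u v : Fin (r+1) → ℤ) :
    nsForm r c (u - v) = nsForm r c u - nsForm r c v := by
  simp only [nsForm, Pi.sub_apply, mul_sub, Finset.sum_sub_distrib]; ring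

lemma nsForm_comm (r : ℕ) (v w : Fin (r+1) → ℤ) : nsForm r v w = nsForm r w v := by
  simp [nsForm, mul_comm]

lemma eVec_mem_Eset (r : ℕ) (i : Fin r) : eVec r i.succ ∈ Eset r := by
  constructor
  · rw [nsForm_eVec_succ]; simp [canK, Fin.succ_ne_zero]
  · rw [nsForm_eVec_succ]; simp [eVec]

/-- For 2 ≤ r ≤ 8 the canonical class k_r is the unique class c with ⟨c,c⟩ = 9-r and
⟨c,e⟩ = -1 for every (-1)-class e. -/
theorem stmt_16 (r : ℕ) (h2 : 2 ≤ r) (h8 : r ≤ 8) (c : Fin (r + 1) → ℤ) :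
    (nsForm r c c = 9 - (r : ℤ) ∧ ∀ e ∈ Eset r, nsForm r c e = -1) ↔ c = canK r := by
  constructor
  · rintro ⟨-, hE⟩
    have hsucc : ∀ i : Fin r, c i.succ = 1 := by
      intro i
      have := hE _ (eVec_mem_Eset r i)
      rw [nsForm_eVec_succ] at this
      omega
    set i1 : Fin r := ⟨0, by omega⟩ with hi1
    set i2 : Fin r := ⟨1, by omega⟩ with hi2
    have hne : i1.succ ≠ i2.succ := by
      simp [Fin.succ_inj, hi1, hi2, Fin.ext_iff]
    set l : Fin (r+1) → ℤ := eVec r 0 - eVec r i1.succ - eVec r i2.succ with hl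
    have hl0 : l 0 = 1 := by
      simp [hl, eVec, (Fin.succ_ne_zero i1).symm, (Fin.succ_ne_zero i2).symm, eq_comm]
    have hl1 : l i1.succ = -1 := by
      simp [hl, eVec, Fin.succ_ne_zero, hne]
    have hl2 : l i2.succ = -1 := by
      simp [hl, eVec, Fin.succ_ne_zero, hne.symm]
    have hmem : l ∈ Eset r := by
      constructor
      · rw [hl, nsForm_sub_right, nsForm_sub_right, nsForm_eVec_zero,
          nsForm_eVec_succ, nsForm_eVec_succ]
        simp [canK, Fin.succ_ne_zero]
      · rw [nsForm_comm, hl, nsForm_sub_right, nsForm_sub_right, nsForm_eVec_zero,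
          nsForm_eVec_succ, nsForm_eVec_succ, ← hl, hl0, hl1, hl2]
        ring
    have hc := hE _ hmem
    rw [hl, nsForm_sub_right, nsForm_sub_right, nsForm_eVec_zero,
      nsForm_eVec_succ, nsForm_eVec_succ, hsucc, hsucc] at hc
    have hc0 : c 0 = -3 := by omega
    funext j
    induction j using Fin.cases with
    | zero => simpa [canK] using hc0
    | succ i => simpa [canK, Fin.succ_ne_zero] using hsucc i
  · rintro rfl
    refine ⟨?_, fun e he => he.1⟩
    simp [nsForm, canK, Fin.succ_ne_zero]
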